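/- (Maurer) Let K be a number field and let k be the positive integer such that tr_{K/ℚ}(O_K) = kℤ. A rational prime p divides k if and only if p divides the ramification index e(𝔭|p) for every prime 𝔭 of O_K lying over p. -/

import Mathlib

lemma trace_eq_of_intertwine {κ M N : Type*} [CommRing κ] [AddCommGroup M] [Module κ M]
    [AddCommGroup N] [Module κ N] (e : M ≃ₗ[κ] N) (f : M →ₗ[κ] M) (g : N →ₗ[κ] N)
    (h : ∀ m, e (f m) = g (e m)) : LinearMap.trace κ M f = LinearMap.trace κ N g := by
  rw [← LinearMap.trace_conj' f e]
  congr 1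
  ext n
  simp only [LinearEquiv.conj_apply, LinearMap.coe_comp, LinearEquiv.coe_coe,
    Function.comp_apply, h, LinearEquiv.apply_symm_apply]

lemma trace_restrict_add_trace_mapQ {κ M : Type*} [Field κ] [AddCommGroup M] [Module κ M]
    [FiniteDimensional κ M] (N : Submodule κ M) (f : M →ₗ[κ] M) (hf : ∀ x ∈ N, f x ∈ N) :
    LinearMap.trace κ M f =
      LinearMap.trace κ N (f.restrict hf) +
      LinearMap.trace κ (M ⧸ N) (N.mapQ N f hf) := by
  obtain ⟨s, hs⟩ := N.mkQ.exists_rightInverse_of_surjective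
    (LinearMap.range_eq_top.2 N.mkQ_surjective)
  have hsq : ∀ y : M ⧸ N, N.mkQ (s y) = y := fun y => congrArg (· y) (congrArg DFunLike.coe hs)
  have hπmem : ∀ x : M, x - s (N.mkQ x) ∈ N := by
    intro x
    rw [← Submodule.Quotient.mk_eq_zero N]
    rw [Submodule.Quotient.mk_sub,
      show (Submodule.Quotient.mk (s (N.mkQ x)) : M ⧸ N) = Submodule.Quotient.mk x from
        hsq (N.mkQ x), sub_self]
  let π : M →ₗ[κ] N := LinearMap.codRestrict N (LinearMap.id - s ∘ₗ N.mkQ) hπmem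
  have hdecomp : f = ((f ∘ₗ N.subtype) ∘ₗ π) + (f ∘ₗ s) ∘ₗ N.mkQ := by
    ext x
    simp [π]
  have e1 : π ∘ₗ (f ∘ₗ N.subtype) = f.restrict hf := by
    apply LinearMap.ext
    rintro ⟨x, hx⟩
    apply Subtype.ext
    show f x - s (N.mkQ (f x)) = f x
    have h0 : N.mkQ (f x) = 0 := (Submodule.Quotient.mk_eq_zero N).mpr (hf x hx)
    rw [h0, map_zero, sub_zero]
  have e2 : N.mkQ ∘ₗ (f ∘ₗ s) = N.mapQ N f hf := by
    apply LinearMap.ext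
    intro y
    show N.mkQ (f (s y)) = N.mapQ N f hf y
    conv_rhs => rw [← hsq y]
    simp only [Submodule.mkQ_apply, Submodule.mapQ_apply]
  rw [show (LinearMap.trace κ M) f = (LinearMap.trace κ M)
      (((f ∘ₗ N.subtype) ∘ₗ π) + (f ∘ₗ s) ∘ₗ N.mkQ) from congrArg _ hdecomp, map_add]
  rw [LinearMap.trace_comp_comm' π (f ∘ₗ N.subtype), e1,
    LinearMap.trace_comp_comm' N.mkQ (f ∘ₗ s), e2]

lemma Algebra.trace_pi {κ : Type*} [Field κ] {ι : Type*} [Fintype ι]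
    (A : ι → Type*) [∀ i, CommRing (A i)] [∀ i, Algebra κ (A i)]
    [∀ i, FiniteDimensional κ (A i)] (x : ∀ i, A i) :
    Algebra.trace κ (∀ i, A i) x = ∑ i, Algebra.trace κ (A i) (x i) := by
  classical
  let b : ∀ i, Module.Basis (Fin (Module.finrank κ (A i))) κ (A i) := fun i => Module.finBasis κ (A i)
  rw [Algebra.trace_eq_matrix_trace (Pi.basis b), Matrix.trace, ← Finset.univ_sigma_univ,
    Finset.sum_sigma]
  refine Finset.sum_congr rfl fun i _ => ?_
  rw [Algebra.trace_eq_matrix_trace (b i), Matrix.trace]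
  refine Finset.sum_congr rfl fun j _ => ?_
  simp only [Matrix.diag_apply, Algebra.leftMulMatrix_eq_repr_mul, Pi.basis_repr,
    Pi.basis_apply, Pi.mul_apply, Pi.single_eq_same]

lemma fd_of_ideal {κ A : Type*} [Field κ] [CommRing A] [Algebra κ A] [FiniteDimensional κ A]
    (I : Ideal A) : FiniteDimensional κ ↥I := by
  have h : FiniteDimensional κ ↥((I : Submodule A A).restrictScalars κ) := inferInstance
  let eqv : ↥((I : Submodule A A).restrictScalars κ) ≃ₗ[κ] ↥I :=
    { toFun := fun x => ⟨x.1, x.2⟩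
      map_add' := fun _ _ => rfl
      map_smul' := fun _ _ => rfl
      invFun := fun x => ⟨x.1, x.2⟩
      left_inv := fun _ => rfl
      right_inv := fun _ => rfl }
  exact Module.Finite.equiv eqv

set_option maxHeartbeats 1000000 in
open Ideal Module in
lemma trace_quot_pow_ramificationIdx {R S : Type*} [CommRing R] [CommRing S] [Algebra R S] [IsDedekindDomain S]
    (p : Ideal R) (P : Ideal S) [p.IsMaximal] [P.IsPrime] (hP0 : P ≠ ⊥)
    [hfp : NeZero (Ideal.ramificationIdx' p P)]
    [Module.Finite (R ⧸ p) (S ⧸ P ^ Ideal.ramificationIdx' p P)] (x : S) :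
    letI : Algebra (R ⧸ p) (S ⧸ P) := Ideal.Quotient.algebraQuotientOfRamificationIdxNeZero p P
    Algebra.trace (R ⧸ p) (S ⧸ P ^ Ideal.ramificationIdx' p P)
        (Ideal.Quotient.mk (P ^ Ideal.ramificationIdx' p P) x) =
      Ideal.ramificationIdx' p P • Algebra.trace (R ⧸ p) (S ⧸ P) (Ideal.Quotient.mk P x) := by
  letI : Field (R ⧸ p) := Ideal.Quotient.field p
  letI : Algebra (R ⧸ p) (S ⧸ P) := Ideal.Quotient.algebraQuotientOfRamificationIdxNeZero p P
  have hMmem : ∀ (i : ℕ) (y : (S ⧸ P ^ Ideal.ramificationIdx' p P)), y ∈ Ideal.map (Ideal.Quotient.mk (P ^ Ideal.ramificationIdx' p P)) (P ^ i) →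
      (Ideal.Quotient.mk (P ^ Ideal.ramificationIdx' p P) x) * y ∈ Ideal.map (Ideal.Quotient.mk (P ^ Ideal.ramificationIdx' p P)) (P ^ i) :=
    fun i y hy => Ideal.mul_mem_left _ _ hy
  let L : ∀ i : ℕ, ↥(Ideal.map (Ideal.Quotient.mk (P ^ Ideal.ramificationIdx' p P)) (P ^ i)) →ₗ[(R ⧸ p)]
      ↥(Ideal.map (Ideal.Quotient.mk (P ^ Ideal.ramificationIdx' p P)) (P ^ i)) := fun i =>
    { toFun := fun y => ⟨(Ideal.Quotient.mk (P ^ Ideal.ramificationIdx' p P) x) * ↑y, hMmem i _ y.2⟩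
      map_add' := fun y z => Subtype.ext (by simp [mul_add])
      map_smul' := fun c y => Subtype.ext (by simp [mul_smul_comm]) }
  haveI hfd : ∀ i : ℕ, FiniteDimensional (R ⧸ p) ↥(Ideal.map (Ideal.Quotient.mk (P ^ Ideal.ramificationIdx' p P)) (P ^ i)) :=
    fun i => fd_of_ideal _
  have key : ∀ j : ℕ, j ≤ Ideal.ramificationIdx' p P → LinearMap.trace (R ⧸ p) _ (L (Ideal.ramificationIdx' p P - j)) =
      j • Algebra.trace (R ⧸ p) (S ⧸ P) (Ideal.Quotient.mk P x) := by
    intro j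
    induction j with
    | zero =>
      intro _
      haveI hss : Subsingleton ↥(Ideal.map (Ideal.Quotient.mk (P ^ Ideal.ramificationIdx' p P)) (P ^ (Ideal.ramificationIdx' p P - 0))) := by
        rw [Nat.sub_zero, Ideal.map_quotient_self]
        exact ⟨fun a b => Subtype.ext (by
          rw [(Ideal.mem_bot).mp a.2, (Ideal.mem_bot).mp b.2])⟩
      rw [Subsingleton.elim (L (Ideal.ramificationIdx' p P - 0)) 0, map_zero, zero_smul]
    | succ j ih =>
      intro hj
      have hi : Ideal.ramificationIdx' p P - (j + 1) < Ideal.ramificationIdx' p P := by omega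
      set i := Ideal.ramificationIdx' p P - (j + 1) with hidef
      have hsucc : Ideal.ramificationIdx' p P - j = i + 1 := by omega
      have hinv : ∀ y ∈ LinearMap.range (powQuotSuccInclusion p P i),
          L i y ∈ LinearMap.range (powQuotSuccInclusion p P i) := by
        rintro y ⟨z, rfl⟩
        exact ⟨L (i + 1) z, Subtype.ext (by simp [L, powQuotSuccInclusion_apply_coe])⟩
      have step := trace_restrict_add_trace_mapQ
        (LinearMap.range (powQuotSuccInclusion p P i)) (L i) hinv
      have ha : LinearMap.trace (R ⧸ p) _ ((L i).restrict hinv) = LinearMap.trace (R ⧸ p) _ (L (i + 1)) := by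
        refine (trace_eq_of_intertwine (LinearEquiv.ofInjective (powQuotSuccInclusion p P i)
          (powQuotSuccInclusion_injective p P i)) (L (i + 1)) ((L i).restrict hinv) ?_).symm
        intro m
        apply Subtype.ext
        apply Subtype.ext
        simp [L, LinearMap.restrict_coe_apply, LinearEquiv.ofInjective_apply,
          powQuotSuccInclusion_apply_coe]
      obtain ⟨a, a_mem, a_not_mem⟩ := SetLike.exists_of_lt
        (Ideal.pow_right_strictAnti P hP0 (Ideal.IsPrime.ne_top inferInstance) (le_refl i.succ))
      have hbij : Function.Bijective (quotientToQuotientRangePowQuotSucc p P a_mem) :=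
        ⟨quotientToQuotientRangePowQuotSucc_injective p P hi a_mem a_not_mem,
         quotientToQuotientRangePowQuotSucc_surjective p P hP0 hi a_mem a_not_mem⟩
      have hb : LinearMap.trace (R ⧸ p) _
          ((LinearMap.range (powQuotSuccInclusion p P i)).mapQ _ (L i) hinv) =
          Algebra.trace (R ⧸ p) (S ⧸ P) (Ideal.Quotient.mk P x) := by
        rw [Algebra.trace_apply]
        refine (trace_eq_of_intertwine (LinearEquiv.ofBijective _ hbij)
          ((Algebra.lmul (R ⧸ p) (S ⧸ P)) (Ideal.Quotient.mk P x)) _ ?_).symm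
        intro m
        obtain ⟨y, rfl⟩ := Ideal.Quotient.mk_surjective m
        have h1 : ((Algebra.lmul (R ⧸ p) (S ⧸ P)) (Ideal.Quotient.mk P x)) (Ideal.Quotient.mk P y) =
            Ideal.Quotient.mk P (x * y) := by
          simp [Module.End.mul_apply]
        rw [LinearEquiv.ofBijective_apply, LinearEquiv.ofBijective_apply, h1]
        show quotientToQuotientRangePowQuotSucc p P a_mem (Submodule.Quotient.mk (x * y)) =
          Submodule.mapQ _ _ (L i) hinv
            (quotientToQuotientRangePowQuotSucc p P a_mem (Submodule.Quotient.mk y))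
        rw [quotientToQuotientRangePowQuotSucc_mk, quotientToQuotientRangePowQuotSucc_mk,
          Submodule.mapQ_apply]
        refine congr_arg Submodule.Quotient.mk (Subtype.ext ?_)
        show Ideal.Quotient.mk (P ^ Ideal.ramificationIdx' p P) (a * (x * y)) = (Ideal.Quotient.mk (P ^ Ideal.ramificationIdx' p P) x) * Ideal.Quotient.mk (P ^ Ideal.ramificationIdx' p P) (a * y)
        rw [← _root_.map_mul]
        exact congr_arg _ (by ring)
      rw [hsucc] at ih
      rw [show Ideal.ramificationIdx' p P - (j + 1) = i from rfl] at *
      rw [step, ha, hb, ih (by omega), succ_nsmul]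
  have htop : Ideal.map (Ideal.Quotient.mk (P ^ Ideal.ramificationIdx' p P)) (P ^ 0) = ⊤ := by
    rw [pow_zero, Ideal.one_eq_top, Ideal.map_top]
  let E0 : ↥(Ideal.map (Ideal.Quotient.mk (P ^ Ideal.ramificationIdx' p P)) (P ^ 0)) ≃ₗ[(R ⧸ p)] (S ⧸ P ^ Ideal.ramificationIdx' p P) :=
    { toFun := fun y => ↑y
      map_add' := fun _ _ => rfl
      map_smul' := fun _ _ => rfl
      invFun := fun a => ⟨a, htop ▸ Submodule.mem_top⟩
      left_inv := fun _ => Subtype.ext rfl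
      right_inv := fun _ => rfl }
  have hcomm : ∀ m, E0 (L 0 m) = ((Algebra.lmul (R ⧸ p) (S ⧸ P ^ Ideal.ramificationIdx' p P)) (Ideal.Quotient.mk (P ^ Ideal.ramificationIdx' p P) x)) (E0 m) := by
    intro m
    simp [E0, L, Module.End.mul_apply]
  have hfinal := trace_eq_of_intertwine E0 (L 0) ((Algebra.lmul (R ⧸ p) (S ⧸ P ^ Ideal.ramificationIdx' p P)) (Ideal.Quotient.mk (P ^ Ideal.ramificationIdx' p P) x)) hcomm
  have h0 := key (Ideal.ramificationIdx' p P) le_rfl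
  rw [Nat.sub_self] at h0
  calc (Algebra.trace (R ⧸ p) (S ⧸ P ^ Ideal.ramificationIdx' p P))
        ((Ideal.Quotient.mk (P ^ Ideal.ramificationIdx' p P)) x)
      = (LinearMap.trace (R ⧸ p) (S ⧸ P ^ Ideal.ramificationIdx' p P))
          ((Algebra.lmul (R ⧸ p) (S ⧸ P ^ Ideal.ramificationIdx' p P))
            ((Ideal.Quotient.mk (P ^ Ideal.ramificationIdx' p P)) x)) := by
        rw [Algebra.trace_apply]
    _ = (LinearMap.trace (R ⧸ p) ↥(Ideal.map (Ideal.Quotient.mk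
          (P ^ Ideal.ramificationIdx' p P)) (P ^ 0))) (L 0) := hfinal.symm
    _ = Ideal.ramificationIdx' p P • (Algebra.trace (R ⧸ p) (S ⧸ P))
          ((Ideal.Quotient.mk P) x) := h0


open NumberField

set_option maxHeartbeats 1600000 in
set_option synthInstance.maxHeartbeats 400000 in
/-- (Maurer) A rational prime `p` divides the generator `k` of `tr_{K/ℚ}(O_K)` if and
only if `p` divides `e(𝔭|p)` for every prime `𝔭` of `O_K` lying over `p`. -/
theorem stmt_4 (K : Type*) [Field K] [NumberField K]
    (k : ℕ) (hk : 0 < k)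
    (htr : LinearMap.range (Algebra.trace ℤ (𝓞 K)) = Ideal.span {(k : ℤ)})
    (p : ℕ) (hp : p.Prime) :
    p ∣ k ↔
      ∀ P : Ideal (𝓞 K), P.IsPrime →
        Ideal.comap (algebraMap ℤ (𝓞 K)) P = Ideal.span {(p : ℤ)} →
        p ∣ Ideal.ramificationIdx' (Ideal.span {(p : ℤ)}) P := by
  classical
  have hpZ : Prime ((p : ℤ)) := Nat.prime_iff_prime_int.mp hp
  haveI hpm : (Ideal.span {(p : ℤ)}).IsMaximal :=
    PrincipalIdealRing.isMaximal_of_irreducible hpZ.irreducible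
  letI : Field (ℤ ⧸ Ideal.span {(p : ℤ)}) := Ideal.Quotient.field _
  have hinj : Function.Injective (algebraMap ℤ (𝓞 K)) :=
    (algebraMap ℤ (𝓞 K)).injective_int
  have hI : Ideal.map (algebraMap ℤ (𝓞 K)) (Ideal.span {(p : ℤ)}) ≠ ⊥ := by
    rw [Ne, Ideal.map_eq_bot_iff_of_injective hinj, Ideal.span_singleton_eq_bot]
    exact_mod_cast hp.ne_zero
  have step1 : (p ∣ k) ↔ ∀ x : 𝓞 K, Algebra.trace ℤ (𝓞 K) x ∈ Ideal.span {(p : ℤ)} := by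
    constructor
    · intro hpk x
      have hx : Algebra.trace ℤ (𝓞 K) x ∈ LinearMap.range (Algebra.trace ℤ (𝓞 K)) := ⟨x, rfl⟩
      rw [htr] at hx
      exact Ideal.span_singleton_le_span_singleton.mpr (Int.natCast_dvd_natCast.mpr hpk) hx
    · intro h
      have hle : Ideal.span {(k : ℤ)} ≤ Ideal.span {(p : ℤ)} := by
        rw [← htr]
        rintro t ⟨x, rfl⟩
        exact h x
      exact Int.natCast_dvd_natCast.mp (Ideal.span_singleton_le_span_singleton.mp hle)
  have step2 : ∀ x : 𝓞 K,
      (Algebra.trace (ℤ ⧸ Ideal.span {(p : ℤ)})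
          ((𝓞 K) ⧸ Ideal.map (algebraMap ℤ (𝓞 K)) (Ideal.span {(p : ℤ)}))
          (Ideal.Quotient.mk _ x) = 0)
        ↔ Algebra.trace ℤ (𝓞 K) x ∈ Ideal.span {(p : ℤ)} := by
    intro x
    rw [Algebra.trace_quotient_eq_of_isDedekindDomain, Algebra.intTrace_eq_trace,
      Ideal.Quotient.eq_zero_iff_mem]
  have htransfer : ∀ ξ : (𝓞 K) ⧸ Ideal.map (algebraMap ℤ (𝓞 K)) (Ideal.span {(p : ℤ)}),
      Algebra.trace (ℤ ⧸ Ideal.span {(p : ℤ)}) _ ξ =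
      Algebra.trace (ℤ ⧸ Ideal.span {(p : ℤ)})
        (∀ P : (UniqueFactorizationMonoid.factors (Ideal.map (algebraMap ℤ (𝓞 K))
            (Ideal.span {(p : ℤ)}))).toFinset,
          (𝓞 K) ⧸ (P : Ideal (𝓞 K)) ^ Ideal.ramificationIdx'
            (Ideal.span {(p : ℤ)}) (P : Ideal (𝓞 K)))
        (Ideal.Factors.piQuotientEquiv (Ideal.span {(p : ℤ)}) hI ξ) := by
    intro ξ
    have h := Algebra.trace_eq_of_equiv_equiv (RingEquiv.refl (ℤ ⧸ Ideal.span {(p : ℤ)}))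
      (Ideal.Factors.piQuotientEquiv (Ideal.span {(p : ℤ)}) hI) ?_ ξ
    · simpa using h
    · refine RingHom.ext fun c => ?_
      obtain ⟨c, rfl⟩ := Ideal.Quotient.mk_surjective c
      funext P
      simp [Ideal.Quotient.algebraMap_quotient_map_quotient,
        Ideal.Factors.piQuotientEquiv_mk, Pi.algebraMap_apply,
        Ideal.Quotient.algebraMap_quotient_pow_ramificationIdx]
  have hsum : ∀ v : (∀ P : (UniqueFactorizationMonoid.factors (Ideal.map (algebraMap ℤ (𝓞 K))
          (Ideal.span {(p : ℤ)}))).toFinset,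
        (𝓞 K) ⧸ (P : Ideal (𝓞 K)) ^ Ideal.ramificationIdx'
          (Ideal.span {(p : ℤ)}) (P : Ideal (𝓞 K))),
      Algebra.trace (ℤ ⧸ Ideal.span {(p : ℤ)}) _ v =
        ∑ P, Algebra.trace (ℤ ⧸ Ideal.span {(p : ℤ)}) _ (v P) :=
    fun v => Algebra.trace_pi
      (fun P : (UniqueFactorizationMonoid.factors (Ideal.map (algebraMap ℤ (𝓞 K))
          (Ideal.span {(p : ℤ)}))).toFinset =>
        (𝓞 K) ⧸ (P : Ideal (𝓞 K)) ^ Ideal.ramificationIdx'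
          (Ideal.span {(p : ℤ)}) (P : Ideal (𝓞 K))) v
  have hmain : (p ∣ k) ↔ ∀ P : (UniqueFactorizationMonoid.factors (Ideal.map (algebraMap ℤ (𝓞 K))
        (Ideal.span {(p : ℤ)}))).toFinset,
      ∀ y : (𝓞 K) ⧸ (P : Ideal (𝓞 K)) ^ Ideal.ramificationIdx'
          (Ideal.span {(p : ℤ)}) (P : Ideal (𝓞 K)),
        Algebra.trace (ℤ ⧸ Ideal.span {(p : ℤ)}) _ y = 0 := by
    rw [step1]
    constructor
    · intro h P y
      have hz : ∀ ξ : (𝓞 K) ⧸ Ideal.map (algebraMap ℤ (𝓞 K)) (Ideal.span {(p : ℤ)}),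
          Algebra.trace (ℤ ⧸ Ideal.span {(p : ℤ)}) _ ξ = 0 := by
        intro ξ
        obtain ⟨x, rfl⟩ := Ideal.Quotient.mk_surjective ξ
        exact (step2 x).mpr (h x)
      have hPi : ∀ v : (∀ P : (UniqueFactorizationMonoid.factors (Ideal.map (algebraMap ℤ (𝓞 K))
            (Ideal.span {(p : ℤ)}))).toFinset,
          (𝓞 K) ⧸ (P : Ideal (𝓞 K)) ^ Ideal.ramificationIdx'
            (Ideal.span {(p : ℤ)}) (P : Ideal (𝓞 K))),
          Algebra.trace (ℤ ⧸ Ideal.span {(p : ℤ)}) _ v = 0 := by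
        intro v
        obtain ⟨ξ, rfl⟩ := (Ideal.Factors.piQuotientEquiv (Ideal.span {(p : ℤ)}) hI).surjective v
        rw [← htransfer ξ]
        exact hz ξ
      have h0 := hPi (Pi.single P y)
      rw [hsum, Fintype.sum_eq_single P
        (fun Q hQ => by rw [Pi.single_eq_of_ne hQ, map_zero]), Pi.single_eq_same] at h0
      exact h0
    · intro h x
      refine (step2 x).mp ?_
      rw [htransfer, Ideal.Factors.piQuotientEquiv_mk, hsum]
      exact Finset.sum_eq_zero fun Q _ => h Q _
  have hloc : ∀ P : (UniqueFactorizationMonoid.factors (Ideal.map (algebraMap ℤ (𝓞 K))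
        (Ideal.span {(p : ℤ)}))).toFinset,
      (∀ y : (𝓞 K) ⧸ (P : Ideal (𝓞 K)) ^ Ideal.ramificationIdx'
          (Ideal.span {(p : ℤ)}) (P : Ideal (𝓞 K)),
        Algebra.trace (ℤ ⧸ Ideal.span {(p : ℤ)}) _ y = 0) ↔
      p ∣ Ideal.ramificationIdx' (Ideal.span {(p : ℤ)})
        (P : Ideal (𝓞 K)) := by
    intro P
    haveI hPprime : (P : Ideal (𝓞 K)).IsPrime := Ideal.Factors.isPrime _ P
    have hP0 : (P : Ideal (𝓞 K)) ≠ ⊥ := Ideal.Factors.ne_bot _ P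
    haveI hPmax : (P : Ideal (𝓞 K)).IsMaximal := Ideal.IsPrime.isMaximal hPprime hP0
    letI : Field ((𝓞 K) ⧸ (P : Ideal (𝓞 K))) := Ideal.Quotient.field _
    letI : Algebra (ℤ ⧸ Ideal.span {(p : ℤ)}) ((𝓞 K) ⧸ (P : Ideal (𝓞 K))) :=
      Ideal.Quotient.algebraQuotientOfRamificationIdxNeZero _ _
    haveI : IsScalarTower ℤ (ℤ ⧸ Ideal.span {(p : ℤ)}) ((𝓞 K) ⧸ (P : Ideal (𝓞 K))) :=
      IsScalarTower.of_algebraMap_eq' (Subsingleton.elim _ _)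
    haveI : Module.Finite ℤ ((𝓞 K) ⧸ (P : Ideal (𝓞 K))) :=
      Module.Finite.of_surjective (Ideal.Quotient.mkₐ ℤ _).toLinearMap
        (Ideal.Quotient.mkₐ_surjective ℤ _)
    haveI : Module.Finite (ℤ ⧸ Ideal.span {(p : ℤ)}) ((𝓞 K) ⧸ (P : Ideal (𝓞 K))) :=
      Module.Finite.of_restrictScalars_finite ℤ _ _
    haveI : NeZero p := ⟨hp.ne_zero⟩
    haveI : Finite (ℤ ⧸ Ideal.span {(p : ℤ)}) :=
      Finite.of_equiv _ (Int.quotientSpanNatEquivZMod p).symm.toEquiv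
    have hcast : ∀ n : ℕ, ((n : ℤ ⧸ Ideal.span {(p : ℤ)}) = 0 ↔ p ∣ n) := by
      intro n
      rw [show ((n : ℤ ⧸ Ideal.span {(p : ℤ)})) = Ideal.Quotient.mk _ ((n : ℤ)) from
        (map_natCast (Ideal.Quotient.mk (Ideal.span {(p : ℤ)})) n).symm,
        Ideal.Quotient.eq_zero_iff_mem, Ideal.mem_span_singleton, Int.natCast_dvd_natCast]
    constructor
    · intro h
      obtain ⟨z, hz⟩ := Algebra.trace_surjective (ℤ ⧸ Ideal.span {(p : ℤ)})
        ((𝓞 K) ⧸ (P : Ideal (𝓞 K))) 1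
      obtain ⟨x, rfl⟩ := Ideal.Quotient.mk_surjective z
      have hD := trace_quot_pow_ramificationIdx
        (Ideal.span {(p : ℤ)}) (P : Ideal (𝓞 K)) hP0 x
      rw [h _, hz] at hD
      rw [← hcast (Ideal.ramificationIdx' (Ideal.span {(p : ℤ)})
        (P : Ideal (𝓞 K)))]
      have := hD.symm
      rwa [nsmul_eq_mul, mul_one] at this
    · intro hdvd y
      obtain ⟨x, rfl⟩ := Ideal.Quotient.mk_surjective y
      rw [trace_quot_pow_ramificationIdx (Ideal.span {(p : ℤ)})
        (P : Ideal (𝓞 K)) hP0 x, nsmul_eq_mul, (hcast _).mpr hdvd, zero_mul]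
  rw [hmain]
  constructor
  · intro h P hPprime hPcomap
    have hmem : P ∈ (UniqueFactorizationMonoid.factors (Ideal.map (algebraMap ℤ (𝓞 K))
        (Ideal.span {(p : ℤ)}))).toFinset := by
      rw [Multiset.mem_toFinset, UniqueFactorizationMonoid.factors_eq_normalizedFactors,
        Ideal.mem_normalizedFactors_iff hI]
      exact ⟨hPprime, Ideal.map_le_iff_le_comap.mpr (le_of_eq hPcomap.symm)⟩
    exact (hloc ⟨P, hmem⟩).mp (h ⟨P, hmem⟩)
  · intro h P
    exact (hloc P).mpr (h (P : Ideal (𝓞 K)) (Ideal.Factors.isPrime _ P)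
      (Ideal.over_def (P : Ideal (𝓞 K)) (Ideal.span {(p : ℤ)})).symm)
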